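/- Let H be a Hermitian matrix on a finite-dimensional Hilbert space with largest and smallest eigenvalues ξ_max and ξ_min. Then for any real θ with |θ| ≤ π/(ξ_max − ξ_min), the minimum over all orthogonal projectors P and unit vectors ψ in the range of P of the quantity ‖P e^{−iθH} ψ‖² equals cos²((ξ_max − ξ_min)θ/2). -/

import Mathlib

open scoped Matrix

/-- The Euclidean norm of a finite complex vector. -/
noncomputable def euclNorm {d : ℕ} (v : Fin d → ℂ) : ℝ :=
  Real.sqrt (∑ i, Complex.normSq (v i))

lemma euclNorm_eq_norm {d : ℕ} (v : Fin d → ℂ) :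
    euclNorm v = ‖(WithLp.equiv 2 (Fin d → ℂ)).symm v‖ := by
  rw [EuclideanSpace.norm_eq, euclNorm]
  congr 1
  refine Finset.sum_congr rfl fun i _ => ?_
  rw [Complex.normSq_eq_norm_sq]
  rfl

lemma abs_dot_le {d : ℕ} (ψ v : Fin d → ℂ) :
    ‖star ψ ⬝ᵥ v‖ ≤ euclNorm ψ * euclNorm v := by
  have h := norm_inner_le_norm (𝕜 := ℂ) ((WithLp.equiv 2 (Fin d → ℂ)).symm ψ)
    ((WithLp.equiv 2 (Fin d → ℂ)).symm v)
  rw [show inner ℂ ((WithLp.equiv 2 (Fin d → ℂ)).symm ψ) ((WithLp.equiv 2 (Fin d → ℂ)).symm v)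
      = star ψ ⬝ᵥ v from by rw [dotProduct_comm]; rfl] at h
  simpa [euclNorm_eq_norm] using h

lemma dot_self_eq {d : ℕ} (v : Fin d → ℂ) :
    star v ⬝ᵥ v = ((∑ i, Complex.normSq (v i) : ℝ) : ℂ) := by
  rw [dotProduct]
  push_cast
  refine Finset.sum_congr rfl fun i _ => ?_
  simp [Complex.normSq_eq_conj_mul_self]

lemma euclNorm_smul {d : ℕ} (a : ℂ) (v : Fin d → ℂ) :
    euclNorm (a • v) = ‖a‖ * euclNorm v := by
  unfold euclNorm
  have h : ∀ i, Complex.normSq ((a • v) i) = Complex.normSq a * Complex.normSq (v i) := by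
    intro i; simp [Complex.normSq_mul]
  rw [Finset.sum_congr rfl fun i _ => h i, ← Finset.mul_sum,
    Real.sqrt_mul (Complex.normSq_nonneg a), Complex.norm_def]

lemma exp_spectral {d : ℕ} (H : Matrix (Fin d) (Fin d) ℂ) (hH : H.IsHermitian) (θ : ℝ) :
    NormedSpace.exp ((-(θ : ℂ) * Complex.I) • H) =
      (hH.eigenvectorUnitary : Matrix (Fin d) (Fin d) ℂ) *
        Matrix.diagonal (fun k => Complex.exp (-(θ : ℂ) * Complex.I * (hH.eigenvalues k))) *
        star (hH.eigenvectorUnitary : Matrix (Fin d) (Fin d) ℂ) := by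
  set U : Matrix (Fin d) (Fin d) ℂ := (hH.eigenvectorUnitary : Matrix (Fin d) (Fin d) ℂ) with hU
  have hsU : star U * U = 1 := by
    simp [hU, Unitary.star_mul_self_of_mem hH.eigenvectorUnitary.2]
  have hUs : U * star U = 1 := by
    simp [hU, Unitary.mul_star_self_of_mem hH.eigenvectorUnitary.2]
  have hUinv : U⁻¹ = star U := Matrix.inv_eq_left_inv hsU
  have h1 : (-(θ : ℂ) * Complex.I) • H =
      U * Matrix.diagonal (fun k => (-(θ : ℂ) * Complex.I) * (hH.eigenvalues k)) * U⁻¹ := by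
    rw [hUinv]
    conv_lhs => rw [hH.spectral_theorem, Unitary.conjStarAlgAut_apply]
    rw [← Matrix.smul_mul, ← Matrix.mul_smul, ← Matrix.diagonal_smul]
    congr 2
  rw [h1, Matrix.exp_conj _ _ (Units.mk U (star U) hUs hsU).isUnit, hUinv]
  congr 2
  rw [Matrix.exp_diagonal]
  ext k
  rw [Pi.exp_def, ← Complex.exp_eq_exp_ℂ]

lemma star_vecMul_eq {d : ℕ} (U : Matrix (Fin d) (Fin d) ℂ) (ψ : Fin d → ℂ) :
    star ψ ᵥ* U = star (star U *ᵥ ψ) := by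
  rw [Matrix.star_mulVec, Matrix.star_eq_conjTranspose, Matrix.conjTranspose_conjTranspose]

lemma dot_diag {d : ℕ} (U : Matrix (Fin d) (Fin d) ℂ) (f : Fin d → ℂ) (ψ : Fin d → ℂ) :
    star ψ ⬝ᵥ ((U * Matrix.diagonal f * star U) *ᵥ ψ)
      = ∑ k, f k * (Complex.normSq ((star U *ᵥ ψ) k) : ℂ) := by
  rw [← Matrix.mulVec_mulVec, ← Matrix.mulVec_mulVec, Matrix.dotProduct_mulVec,
    star_vecMul_eq, dotProduct]
  refine Finset.sum_congr rfl fun k _ => ?_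
  simp only [Matrix.mulVec_diagonal, Pi.star_apply, RCLike.star_def]
  rw [mul_left_comm, ← Complex.normSq_eq_conj_mul_self]

lemma sum_normSq_star_mulVec {d : ℕ} (U : Matrix (Fin d) (Fin d) ℂ)
    (hUs : U * star U = 1) (ψ : Fin d → ℂ) :
    ∑ k, Complex.normSq ((star U *ᵥ ψ) k) = ∑ i, Complex.normSq (ψ i) := by
  have h : star (star U *ᵥ ψ) ⬝ᵥ (star U *ᵥ ψ) = star ψ ⬝ᵥ ψ := by
    rw [Matrix.dotProduct_mulVec, ← star_vecMul_eq, Matrix.vecMul_vecMul, hUs,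
      Matrix.vecMul_one]
  have h1 := dot_self_eq (star U *ᵥ ψ)
  have h2 := dot_self_eq ψ
  rw [h1, h2] at h
  exact_mod_cast h

lemma proj_mulVec {d : ℕ} (ψ x : Fin d → ℂ) :
    Matrix.vecMulVec ψ (star ψ) *ᵥ x = (star ψ ⬝ᵥ x) • ψ := by
  ext i
  simp only [Matrix.mulVec, Matrix.vecMulVec_apply, dotProduct, Pi.smul_apply,
    smul_eq_mul, Finset.sum_mul, Pi.star_apply]
  exact Finset.sum_congr rfl fun k _ => by ring

lemma proj_isHermitian {d : ℕ} (ψ : Fin d → ℂ) :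
    (Matrix.vecMulVec ψ (star ψ)).IsHermitian := by
  ext i j
  simp [Matrix.conjTranspose_apply, Matrix.vecMulVec_apply, mul_comm]

lemma proj_idem {d : ℕ} (ψ : Fin d → ℂ) (hψ : star ψ ⬝ᵥ ψ = 1) :
    Matrix.vecMulVec ψ (star ψ) * Matrix.vecMulVec ψ (star ψ) = Matrix.vecMulVec ψ (star ψ) := by
  ext i j
  simp only [Matrix.mul_apply, Matrix.vecMulVec_apply]
  have h : ∑ k, (ψ i * star ψ k) * (ψ k * star ψ j)
      = (star ψ ⬝ᵥ ψ) * (ψ i * star ψ j) := by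
    rw [dotProduct, Finset.sum_mul]
    exact Finset.sum_congr rfl fun k _ => by simp; ring
  rw [h, hψ, one_mul]

lemma cos_le_abs_sum_exp {d : ℕ} (lam : Fin d → ℝ) (p : Fin d → ℝ)
    (hp : ∀ k, 0 ≤ p k) (hp1 : ∑ k, p k = 1)
    (ξmin ξmax θ : ℝ) (hΔ : 0 ≤ ξmax - ξmin)
    (hlo : ∀ k, ξmin ≤ lam k) (hhi : ∀ k, lam k ≤ ξmax)
    (hθΔ : |θ| * (ξmax - ξmin) ≤ Real.pi) :
    Real.cos ((ξmax - ξmin) * θ / 2)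
      ≤ ‖∑ k, Complex.exp (-(θ : ℂ) * Complex.I * (lam k : ℂ)) * (p k : ℂ)‖ := by
  set μ : ℝ := (ξmax + ξmin) / 2 with hμ
  set z : ℂ := ∑ k, Complex.exp (-(θ : ℂ) * Complex.I * (lam k : ℂ)) * (p k : ℂ) with hz
  have hre : (Complex.exp ((↑(θ * μ) : ℂ) * Complex.I) * z).re
      = ∑ k, p k * Real.cos (θ * μ - θ * lam k) := by
    rw [hz, Finset.mul_sum, Complex.re_sum]
    refine Finset.sum_congr rfl fun k _ => ?_
    have harg : Complex.exp ((↑(θ * μ) : ℂ) * Complex.I)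
          * (Complex.exp (-(θ : ℂ) * Complex.I * (lam k : ℂ)) * (p k : ℂ))
        = (p k : ℂ) * Complex.exp ((↑(θ * μ - θ * lam k) : ℂ) * Complex.I) := by
      rw [show ((θ * μ - θ * lam k : ℝ) : ℂ) * Complex.I
          = ((θ * μ : ℝ) : ℂ) * Complex.I + (-(θ : ℂ) * Complex.I * (lam k : ℂ)) by
        push_cast; ring]
      rw [Complex.exp_add]; ring
    rw [harg, Complex.re_ofReal_mul, Complex.exp_ofReal_mul_I_re]
  have hterm : ∀ k, Real.cos ((ξmax - ξmin) * θ / 2) ≤ Real.cos (θ * μ - θ * lam k) := by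
    intro k
    have h1 : |θ * μ - θ * lam k| ≤ |θ| * (ξmax - ξmin) / 2 := by
      rw [show θ * μ - θ * lam k = θ * (μ - lam k) by ring, abs_mul]
      have h2 : |μ - lam k| ≤ (ξmax - ξmin) / 2 := by
        rw [abs_le]; constructor
        · have := hhi k; rw [hμ]; linarith
        · have := hlo k; rw [hμ]; linarith
      calc |θ| * |μ - lam k| ≤ |θ| * ((ξmax - ξmin) / 2) :=
            mul_le_mul_of_nonneg_left h2 (abs_nonneg θ)
        _ = |θ| * (ξmax - ξmin) / 2 := by ring
    have h3 : Real.cos ((ξmax - ξmin) * θ / 2) = Real.cos (|θ| * (ξmax - ξmin) / 2) := by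
      rw [← Real.cos_abs ((ξmax - ξmin) * θ / 2), abs_div, abs_mul, abs_of_nonneg hΔ,
        abs_of_nonneg (by norm_num : (0:ℝ) ≤ 2)]
      ring_nf
    rw [h3, ← Real.cos_abs (θ * μ - θ * lam k)]
    exact Real.cos_le_cos_of_nonneg_of_le_pi (abs_nonneg _)
      (by nlinarith [Real.pi_nonneg]) h1
  calc Real.cos ((ξmax - ξmin) * θ / 2)
      = ∑ k, p k * Real.cos ((ξmax - ξmin) * θ / 2) := by
        rw [← Finset.sum_mul, hp1, one_mul]
    _ ≤ ∑ k, p k * Real.cos (θ * μ - θ * lam k) :=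
        Finset.sum_le_sum fun k _ => mul_le_mul_of_nonneg_left (hterm k) (hp k)
    _ = (Complex.exp ((↑(θ * μ) : ℂ) * Complex.I) * z).re := hre.symm
    _ ≤ ‖Complex.exp ((↑(θ * μ) : ℂ) * Complex.I) * z‖ := Complex.re_le_norm _
    _ = ‖z‖ := by
        rw [norm_mul, Complex.norm_exp]
        simp

lemma construction {d : ℕ} (E U : Matrix (Fin d) (Fin d) ℂ) (f : Fin d → ℂ)
    (hsU : star U * U = 1) (hUs : U * star U = 1)
    (hkey : ∀ ψ : Fin d → ℂ, star ψ ⬝ᵥ (E *ᵥ ψ) = ∑ k, f k * (Complex.normSq ((star U *ᵥ ψ) k) : ℂ))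
    (e : Fin d → ℂ) (he1 : ∑ j, Complex.normSq (e j) = 1) :
    ∃ (P : Matrix (Fin d) (Fin d) ℂ) (ψ : Fin d → ℂ),
        P.IsHermitian ∧ P * P = P ∧ P.mulVec ψ = ψ ∧ euclNorm ψ = 1 ∧
        Complex.normSq (∑ k, f k * (Complex.normSq (e k) : ℂ))
          = (euclNorm (P.mulVec (E.mulVec ψ))) ^ 2 := by
  set ψ : Fin d → ℂ := U *ᵥ e with hψdef
  have hce : star U *ᵥ ψ = e := by
    rw [hψdef, Matrix.mulVec_mulVec, hsU, Matrix.one_mulVec]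
  have hψsum : ∑ i, Complex.normSq (ψ i) = 1 := by
    have h := sum_normSq_star_mulVec U hUs ψ
    rw [hce] at h
    rw [← h]; exact he1
  have hψdot : star ψ ⬝ᵥ ψ = 1 := by
    rw [dot_self_eq, hψsum]; norm_num
  have hψn : euclNorm ψ = 1 := by rw [euclNorm, hψsum, Real.sqrt_one]
  refine ⟨Matrix.vecMulVec ψ (star ψ), ψ, proj_isHermitian ψ, proj_idem ψ hψdot,
    by rw [show (Matrix.vecMulVec ψ (star ψ)).mulVec ψ = Matrix.vecMulVec ψ (star ψ) *ᵥ ψ from rfl,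
      proj_mulVec, hψdot, one_smul], hψn, ?_⟩
  rw [show (Matrix.vecMulVec ψ (star ψ)).mulVec (E.mulVec ψ)
      = Matrix.vecMulVec ψ (star ψ) *ᵥ (E *ᵥ ψ) from rfl, proj_mulVec, euclNorm_smul, hψn,
    mul_one, Complex.sq_norm, hkey ψ, hce]


/-- **Lemma 1.** For a Hermitian matrix `H` with smallest and largest eigenvalues
`ξmin` and `ξmax`, and any real `θ` with `|θ| ≤ π / (ξmax - ξmin)`, the minimum over all
orthogonal projectors `P` and unit vectors `ψ` in the range of `P` of
`‖P e^{-iθH} ψ‖²` equals `cos²((ξmax - ξmin) θ / 2)`. -/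
theorem zeno_one_step_min {d : ℕ} (H : Matrix (Fin d) (Fin d) ℂ) (hH : H.IsHermitian)
    (ξmin ξmax : ℝ)
    (hmin : IsLeast (Set.range hH.eigenvalues) ξmin)
    (hmax : IsGreatest (Set.range hH.eigenvalues) ξmax)
    (θ : ℝ) (hθ : |θ| ≤ Real.pi / (ξmax - ξmin)) :
    IsLeast
      {x : ℝ | ∃ (P : Matrix (Fin d) (Fin d) ℂ) (ψ : Fin d → ℂ),
        P.IsHermitian ∧ P * P = P ∧ P.mulVec ψ = ψ ∧ euclNorm ψ = 1 ∧
        x = (euclNorm (P.mulVec ((NormedSpace.exp ((-(θ : ℂ) * Complex.I) • H)).mulVec ψ))) ^ 2}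
      (Real.cos ((ξmax - ξmin) * θ / 2) ^ 2) := by
  classical
  obtain ⟨k0, hk0⟩ := hmin.1
  obtain ⟨l0, hl0⟩ := hmax.1
  have hmm : ξmin ≤ ξmax := hmin.2 hmax.1
  have hΔ : 0 ≤ ξmax - ξmin := by linarith
  have hθΔ : |θ| * (ξmax - ξmin) ≤ Real.pi := by
    rcases eq_or_lt_of_le hΔ with h | h
    · rw [← h, mul_zero]; exact Real.pi_nonneg
    · rw [le_div_iff₀ h] at hθ; exact hθ
  have hcosnn : 0 ≤ Real.cos ((ξmax - ξmin) * θ / 2) := by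
    apply Real.cos_nonneg_of_mem_Icc
    rw [Set.mem_Icc]
    constructor
    · nlinarith [mul_le_mul_of_nonneg_left (neg_abs_le θ) hΔ, Real.pi_nonneg]
    · nlinarith [mul_le_mul_of_nonneg_left (le_abs_self θ) hΔ, Real.pi_nonneg]
  set U : Matrix (Fin d) (Fin d) ℂ := (hH.eigenvectorUnitary : Matrix (Fin d) (Fin d) ℂ)
    with hUdef
  have hsU : star U * U = 1 := by
    simp [hUdef, Unitary.star_mul_self_of_mem hH.eigenvectorUnitary.2]
  have hUs : U * star U = 1 := by
    simp [hUdef, Unitary.mul_star_self_of_mem hH.eigenvectorUnitary.2]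
  set f : Fin d → ℂ := fun k => Complex.exp (-(θ : ℂ) * Complex.I * (hH.eigenvalues k)) with hf
  set E : Matrix (Fin d) (Fin d) ℂ := NormedSpace.exp ((-(θ : ℂ) * Complex.I) • H) with hEdef
  have hE : E = U * Matrix.diagonal f * star U := exp_spectral H hH θ
  have hkey : ∀ ψ : Fin d → ℂ,
      star ψ ⬝ᵥ (E *ᵥ ψ) = ∑ k, f k * (Complex.normSq ((star U *ᵥ ψ) k) : ℂ) := fun ψ => by
    rw [hE]; exact dot_diag U f ψ
  constructor
  · -- membership
    rcases eq_or_ne ξmin ξmax with hc | hc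
    · -- degenerate case : single eigenvector
      set e : Fin d → ℂ := Pi.single k0 1 with he
      have he1 : ∑ j, Complex.normSq (e j) = 1 := by
        simp [he, Pi.single_apply, apply_ite Complex.normSq]
      obtain ⟨P, ψ, h1, h2, h3, h4, h5⟩ := construction E U f hsU hUs hkey e he1
      refine ⟨P, ψ, h1, h2, h3, h4, ?_⟩
      rw [← h5]
      have hz : ∑ k, f k * (Complex.normSq (e k) : ℂ) = f k0 := by
        simp [he, Pi.single_apply, apply_ite Complex.normSq,
          apply_ite (fun r : ℝ => (r : ℂ)), mul_ite]
      rw [hz]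
      have : Complex.normSq (f k0) = 1 := by
        rw [hf]
        simp only []
        rw [Complex.normSq_eq_norm_sq, Complex.norm_exp]
        simp [Complex.mul_re]
      rw [this, ← hc, sub_self]
      norm_num
    · -- nondegenerate case
      have hkl : k0 ≠ l0 := fun h => hc (by rw [← hk0, h, hl0])
      set a : ℝ := -(θ * ξmin) with ha
      set b : ℝ := -(θ * ξmax) with hb
      set c : ℂ := (((Real.sqrt 2)⁻¹ : ℝ) : ℂ) with hcdef
      have hhalf : Complex.normSq c = 1/2 := by
        rw [hcdef, Complex.normSq_ofReal, ← mul_inv, Real.mul_self_sqrt (by norm_num)]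
        norm_num
      set e : Fin d → ℂ := fun j => if j = k0 then c else if j = l0 then c else 0 with he
      have hesplit : ∀ j, Complex.normSq (e j)
          = (if j = k0 then (1:ℝ)/2 else 0) + (if j = l0 then (1:ℝ)/2 else 0) := by
        intro j
        by_cases h1 : j = k0 <;> by_cases h2 : j = l0 <;>
          simp_all [he, hhalf]
      have he1 : ∑ j, Complex.normSq (e j) = 1 := by
        rw [Finset.sum_congr rfl fun j _ => hesplit j, Finset.sum_add_distrib]
        simp
        norm_num
      obtain ⟨P, ψ, h1, h2, h3, h4, h5⟩ := construction E U f hsU hUs hkey e he1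
      refine ⟨P, ψ, h1, h2, h3, h4, ?_⟩
      rw [← h5]
      have hz : ∑ k, f k * (Complex.normSq (e k) : ℂ)
          = (Complex.exp ((a : ℂ) * Complex.I) + Complex.exp ((b : ℂ) * Complex.I))
            * ((1:ℂ)/2) := by
        have hterm : ∀ k, f k * (Complex.normSq (e k) : ℂ)
            = (if k = k0 then f k0 * ((1:ℂ)/2) else 0) + (if k = l0 then f l0 * ((1:ℂ)/2) else 0) := by
          intro k
          by_cases h1 : k = k0 <;> by_cases h2 : k = l0 <;>
            simp_all [he, hhalf] <;> push_cast <;> ring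
        rw [Finset.sum_congr rfl fun k _ => hterm k, Finset.sum_add_distrib]
        simp only [Finset.sum_ite_eq', Finset.mem_univ, if_true]
        have hfk : f k0 = Complex.exp ((a : ℂ) * Complex.I) := by
          rw [hf]; simp only []; rw [hk0]; congr 1; rw [ha]; push_cast; ring
        have hfl : f l0 = Complex.exp ((b : ℂ) * Complex.I) := by
          rw [hf]; simp only []; rw [hl0]; congr 1; rw [hb]; push_cast; ring
        rw [hfk, hfl]; ring
      rw [hz]
      rw [Complex.normSq_mul]
      have h12 : Complex.normSq ((1:ℂ)/2) = 1/4 := by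
        norm_num [Complex.normSq_apply]
      rw [h12, Complex.normSq_apply]
      simp only [Complex.add_re, Complex.add_im, Complex.exp_ofReal_mul_I_re,
        Complex.exp_ofReal_mul_I_im]
      have hcos2 := Real.cos_sq ((ξmax - ξmin) * θ / 2)
      have harg : 2 * ((ξmax - ξmin) * θ / 2) = a - b := by rw [ha, hb]; ring
      rw [hcos2, harg, Real.cos_sub]
      linear_combination (-(1:ℝ)/4) * Real.sin_sq_add_cos_sq a + (-(1:ℝ)/4) * Real.sin_sq_add_cos_sq b
  · -- lower bound
    rintro x ⟨P, ψ, hPH, hPP, hPψ, hψn, rfl⟩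
    have hψsum : ∑ i, Complex.normSq (ψ i) = 1 := by
      have h := hψn
      rw [euclNorm] at h
      have hnn : 0 ≤ ∑ i, Complex.normSq (ψ i) :=
        Finset.sum_nonneg fun i _ => Complex.normSq_nonneg _
      nlinarith [Real.sq_sqrt hnn]
    set v : Fin d → ℂ := E *ᵥ ψ with hv
    have hproj : star ψ ⬝ᵥ (P *ᵥ v) = star ψ ⬝ᵥ v := by
      rw [Matrix.dotProduct_mulVec]
      have h1 : star ψ ᵥ* P = star ψ := by
        conv_lhs => rw [← hPH]
        rw [← Matrix.star_mulVec, hPψ]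
      rw [h1]
    have hp1 : ∑ k, Complex.normSq ((star U *ᵥ ψ) k) = 1 := by
      rw [sum_normSq_star_mulVec U hUs ψ, hψsum]
    have hcore := cos_le_abs_sum_exp hH.eigenvalues
      (fun k => Complex.normSq ((star U *ᵥ ψ) k)) (fun k => Complex.normSq_nonneg _)
      hp1 ξmin ξmax θ hΔ (fun k => hmin.2 ⟨k, rfl⟩) (fun k => hmax.2 ⟨k, rfl⟩) hθΔ
    have habs : Real.cos ((ξmax - ξmin) * θ / 2) ≤ ‖star ψ ⬝ᵥ v‖ := by
      rw [hkey ψ]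
      exact hcore
    have hcs : ‖star ψ ⬝ᵥ v‖ ≤ euclNorm (P *ᵥ v) := by
      calc ‖star ψ ⬝ᵥ v‖ = ‖star ψ ⬝ᵥ (P *ᵥ v)‖ := by rw [hproj]
        _ ≤ euclNorm ψ * euclNorm (P *ᵥ v) := abs_dot_le _ _
        _ = euclNorm (P *ᵥ v) := by rw [hψn, one_mul]
    exact pow_le_pow_left₀ hcosnn (le_trans habs hcs) 2
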